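/- Let o ∈ I be a node such that no edge of E has both endpoints equal to o, and suppose V_o = ⊕_{j∈J} W_j is a direct sum decomposition indexed by a finite set J, with inclusions ι_j : W_j → V_o and projections π_j : V_o → W_j. Let Q′ be the splayed quiver: its node set is I′ = (I ∖ {o}) ⊔ J, with vector space W_j at node j ∈ J and V_i at i ∈ I ∖ {o}; each edge of E incident to o is replaced by one copy for each element of J, connected in the same way. Given a representation φ of the doubled quiver of Q, define a representation φ′ of the doubled quiver of Q′ by composing each map into o with the projections π_j and each map out of o with the inclusions ι_j (and keeping all other maps). Then μ′_j(φ′) = π_j ∘ μ_o(φ) ∘ ι_j for every j ∈ J, and μ′_i(φ′) = μ_i(φ) for every i ∈ I ∖ {o}. -/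

import Mathlib

/-! STATEMENT 8: splaying (blowing up) a node.

The quiver `Q` has node set `I₀ ⊕ Unit`, with `o = Sum.inr ()` the node to be splayed.
Since no edge has both endpoints equal to `o`, the edge set decomposes as
`E = E₀ ⊕ E₁ ⊕ E₂`, where edges in `E₀` do not touch `o` (head `h₀`, tail `t₀` in `I₀`),
edges in `E₁` have head `o` and tail `t₁` in `I₀`, and edges in `E₂` have tail `o` and
head `h₂` in `I₀`.  The vector space at `o` is the direct sum `V_o = ⊕_{j ∈ J} W j`
(`= Π j, W j`, `J` finite), with canonical inclusions `ι_j = LinearMap.single ℂ W j` and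
projections `π_j = LinearMap.proj j`; node `i ∈ I₀` carries `V₀ i`.

The splayed quiver `Q'` has node set `I₀ ⊕ J` and edge set `E₀ ⊕ (E₁ × J) ⊕ (E₂ × J)`
(each edge incident to `o` is replaced by one copy for each `j ∈ J`, connected in the same
way).  Given a representation `φ = (φp, φm)` of the doubled quiver of `Q`, the
representation `φ' = (splφp, splφm)` of the doubled quiver of `Q'` is obtained by
composing each map into `o` with the projections `π_j` and each map out of `o` with the
inclusions `ι_j`, keeping all other maps.  Then `μ'_j(φ') = π_j ∘ μ_o(φ) ∘ ι_j` for every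
`j ∈ J` and `μ'_i(φ') = μ_i(φ)` for every `i ∈ I₀`. -/

universe u

/-- The `i`-th moment map component
`μ_i(φ) = Σ_{e : hd e = i} φ_e ∘ φ_{e*} − Σ_{e : tl e = i} φ_{e*} ∘ φ_e ∈ End(V i)`. -/
def muQ {I E : Type*} [Fintype E] [DecidableEq I] (hd tl : E → I)
    (V : I → Type*) [∀ i, AddCommGroup (V i)] [∀ i, Module ℂ (V i)]
    (φp : ∀ e, V (tl e) →ₗ[ℂ] V (hd e)) (φm : ∀ e, V (hd e) →ₗ[ℂ] V (tl e))
    (i : I) : V i →ₗ[ℂ] V i :=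
  (∑ e : E, if he : hd e = i then he ▸ ((φp e).comp (φm e)) else 0) -
    ∑ e : E, if te : tl e = i then te ▸ ((φm e).comp (φp e)) else 0

/-- Vector spaces on the nodes of `Q`: `V₀ i` at `i ∈ I₀` and `Π j, W j` at `o`. -/
abbrev splV {I₀ J : Type} (V₀ : I₀ → Type u) (W : J → Type u) : I₀ ⊕ Unit → Type u
  | .inl i => V₀ i
  | .inr _ => ∀ j : J, W j

/-- Vector spaces on the nodes of `Q'`: `V₀ i` at `i ∈ I₀` and `W j` at `j ∈ J`. -/
abbrev splV' {I₀ J : Type} (V₀ : I₀ → Type u) (W : J → Type u) : I₀ ⊕ J → Type u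
  | .inl i => V₀ i
  | .inr j => W j

/-- Head map of `Q`. -/
abbrev splHd {I₀ E₀ E₁ E₂ : Type} (h₀ : E₀ → I₀) (h₂ : E₂ → I₀) :
    E₀ ⊕ E₁ ⊕ E₂ → I₀ ⊕ Unit
  | .inl e => .inl (h₀ e)
  | .inr (.inl _) => .inr ()
  | .inr (.inr e) => .inl (h₂ e)

/-- Tail map of `Q`. -/
abbrev splTl {I₀ E₀ E₁ E₂ : Type} (t₀ : E₀ → I₀) (t₁ : E₁ → I₀) :
    E₀ ⊕ E₁ ⊕ E₂ → I₀ ⊕ Unit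
  | .inl e => .inl (t₀ e)
  | .inr (.inl e) => .inl (t₁ e)
  | .inr (.inr _) => .inr ()

/-- Head map of the splayed quiver `Q'`. -/
abbrev splHd' {I₀ E₀ E₁ E₂ J : Type} (h₀ : E₀ → I₀) (h₂ : E₂ → I₀) :
    E₀ ⊕ (E₁ × J) ⊕ (E₂ × J) → I₀ ⊕ J
  | .inl e => .inl (h₀ e)
  | .inr (.inl p) => .inr p.2
  | .inr (.inr p) => .inl (h₂ p.1)

/-- Tail map of the splayed quiver `Q'`. -/
abbrev splTl' {I₀ E₀ E₁ E₂ J : Type} (t₀ : E₀ → I₀) (t₁ : E₁ → I₀) :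
    E₀ ⊕ (E₁ × J) ⊕ (E₂ × J) → I₀ ⊕ J
  | .inl e => .inl (t₀ e)
  | .inr (.inl p) => .inl (t₁ p.1)
  | .inr (.inr p) => .inr p.2


instance instSplVACG {I₀ J : Type} (V₀ : I₀ → Type u) (W : J → Type u)
    [∀ i, AddCommGroup (V₀ i)] [∀ j, AddCommGroup (W j)] :
    ∀ x, AddCommGroup (splV V₀ W x)
  | .inl i => inferInstanceAs (AddCommGroup (V₀ i))
  | .inr _ => inferInstanceAs (AddCommGroup (∀ j, W j))

instance instSplVMod {I₀ J : Type} (V₀ : I₀ → Type u) (W : J → Type u)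
    [∀ i, AddCommGroup (V₀ i)] [∀ i, Module ℂ (V₀ i)]
    [∀ j, AddCommGroup (W j)] [∀ j, Module ℂ (W j)] :
    ∀ x, Module ℂ (splV V₀ W x)
  | .inl i => inferInstanceAs (Module ℂ (V₀ i))
  | .inr _ => inferInstanceAs (Module ℂ (∀ j, W j))

instance instSplV'ACG {I₀ J : Type} (V₀ : I₀ → Type u) (W : J → Type u)
    [∀ i, AddCommGroup (V₀ i)] [∀ j, AddCommGroup (W j)] :
    ∀ x, AddCommGroup (splV' V₀ W x)
  | .inl i => inferInstanceAs (AddCommGroup (V₀ i))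
  | .inr j => inferInstanceAs (AddCommGroup (W j))

instance instSplV'Mod {I₀ J : Type} (V₀ : I₀ → Type u) (W : J → Type u)
    [∀ i, AddCommGroup (V₀ i)] [∀ i, Module ℂ (V₀ i)]
    [∀ j, AddCommGroup (W j)] [∀ j, Module ℂ (W j)] :
    ∀ x, Module ℂ (splV' V₀ W x)
  | .inl i => inferInstanceAs (Module ℂ (V₀ i))
  | .inr j => inferInstanceAs (Module ℂ (W j))

section Splay

variable {I₀ E₀ E₁ E₂ J : Type} (V₀ : I₀ → Type u) (W : J → Type u)
  [∀ i, AddCommGroup (V₀ i)] [∀ i, Module ℂ (V₀ i)]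
  [∀ j, AddCommGroup (W j)] [∀ j, Module ℂ (W j)] [DecidableEq J]
  (h₀ t₀ : E₀ → I₀) (t₁ : E₁ → I₀) (h₂ : E₂ → I₀)
  (φp : ∀ e, splV V₀ W (splTl t₀ t₁ e) →ₗ[ℂ] splV V₀ W (splHd h₀ h₂ e))
  (φm : ∀ e, splV V₀ W (splHd h₀ h₂ e) →ₗ[ℂ] splV V₀ W (splTl t₀ t₁ e))

/-- The splayed representation: each map into `o` is composed with the projections `π_j`
and each map out of `o` with the inclusions `ι_j`; all other maps are kept. -/
def splφp : ∀ e', splV' V₀ W (splTl' t₀ t₁ e') →ₗ[ℂ] splV' V₀ W (splHd' h₀ h₂ e')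
  | .inl e => φp (.inl e)
  | .inr (.inl p) => (LinearMap.proj p.2).comp (φp (.inr (.inl p.1)))
  | .inr (.inr p) => (φp (.inr (.inr p.1))).comp (LinearMap.single ℂ W p.2)

/-- The reverse maps of the splayed representation. -/
def splφm : ∀ e', splV' V₀ W (splHd' h₀ h₂ e') →ₗ[ℂ] splV' V₀ W (splTl' t₀ t₁ e')
  | .inl e => φm (.inl e)
  | .inr (.inl p) => (φm (.inr (.inl p.1))).comp (LinearMap.single ℂ W p.2)
  | .inr (.inr p) => (LinearMap.proj p.2).comp (φm (.inr (.inr p.1)))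

theorem stmt_8 [Fintype I₀] [Fintype E₀] [Fintype E₁] [Fintype E₂] [Fintype J]
    [DecidableEq I₀]
    [∀ i, FiniteDimensional ℂ (V₀ i)] [∀ j, FiniteDimensional ℂ (W j)] :
    (∀ j : J,
      muQ (splHd' h₀ h₂) (splTl' t₀ t₁) (splV' V₀ W)
          (splφp V₀ W h₀ t₀ t₁ h₂ φp) (splφm V₀ W h₀ t₀ t₁ h₂ φm) (.inr j) =
        (LinearMap.proj j).comp
          ((muQ (splHd h₀ h₂) (splTl t₀ t₁) (splV V₀ W) φp φm (.inr ())).comp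
            (LinearMap.single ℂ W j))) ∧
    (∀ i : I₀,
      muQ (splHd' h₀ h₂) (splTl' t₀ t₁) (splV' V₀ W)
          (splφp V₀ W h₀ t₀ t₁ h₂ φp) (splφm V₀ W h₀ t₀ t₁ h₂ φm) (.inl i) =
        muQ (splHd h₀ h₂) (splTl t₀ t₁) (splV V₀ W) φp φm (.inl i)) := by
  constructor
  · intro j
    ext w : 1
    simp [muQ, splφp, splφm, splHd, splTl, splHd', splTl', Fintype.sum_sum_type, Fintype.sum_prod_type,
      LinearMap.sum_apply, Finset.sum_apply]
    congr 1 <;>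
    · erw [LinearMap.sum_apply, LinearMap.sum_apply, Finset.sum_apply]; rfl
  · intro i
    ext x : 1
    simp [muQ, splφp, splφm, splHd, splTl, splHd', splTl', Fintype.sum_sum_type, Fintype.sum_prod_type,
      LinearMap.sum_apply, Finset.sum_apply]
    congr 1 <;> congr 1
    · refine Finset.sum_congr rfl fun e _ => ?_
      by_cases h : h₀ e = i
      · subst h; simp
      · simp [splHd, splTl, splHd', splTl', h]
    · refine Finset.sum_congr rfl fun e _ => ?_
      by_cases h : h₂ e = i
      · subst h
        simp
        erw [LinearMap.sum_apply]; simp only [LinearMap.comp_apply]; refine (map_sum (φp (Sum.inr (Sum.inr e))) _ _).symm.trans ?_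
        exact congrArg _ (Finset.univ_sum_single _)
      · simp [splHd, splTl, splHd', splTl', h]
    · refine Finset.sum_congr rfl fun e _ => ?_
      by_cases h : t₀ e = i
      · subst h; simp
      · simp [splHd, splTl, splHd', splTl', h]
    · refine Finset.sum_congr rfl fun e _ => ?_
      by_cases h : t₁ e = i
      · subst h
        simp
        erw [LinearMap.sum_apply]; simp only [LinearMap.comp_apply]; refine (map_sum (φm (Sum.inr (Sum.inl e))) _ _).symm.trans ?_
        exact congrArg _ (Finset.univ_sum_single _)
      · simp [splHd, splTl, splHd', splTl', h]

end Splay
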